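/- Let (Ω, 𝔉, P) be a probability space with a filtration 𝔅₀ ⊆ 𝔅₁ ⊆ … ⊆ 𝔅_t, and let p_min > 0 and h > 0 with M := 1/(p_min·h). Suppose X₁, …, X_t are real random variables and μ₁, …, μ_t are real random variables such that for every s: X_s is 𝔅_s-measurable, μ_s is 𝔅_{s−1}-measurable with 0 ≤ μ_s ≤ 1 almost surely, E[X_s | 𝔅_{s−1}] = μ_s almost surely, 0 ≤ X_s ≤ M almost surely, and E[X_s² | 𝔅_{s−1}] ≤ M·μ_s almost surely. Then for any δ' ∈ (0, 1/e), with probability at least 1 − δ', |(1/t)·Σ_{s=1}^t X_s − (1/t)·Σ_{s=1}^t μ_s| ≤ √(((1/t)·Σ_{s=1}^t μ_s) · 16·ln(2t/δ')/(t·p_min·h)) + 2·ln(2t/δ')/(t·p_min·h). -/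

import Mathlib

open MeasureTheory Finset Real

/-- Concentration of IPS estimates of smoothed policy losses along a predictable
sequence of policies (abstract martingale form; Lemma "unif-conv-log", item 1). -/

lemma aux_exp_quad {x : ℝ} (hx : |x| ≤ 1) : Real.exp x ≤ 1 + x + x ^ 2 := by
  have h := Real.exp_bound hx (n := 2) (by norm_num)
  simp [Finset.sum_range_succ] at h
  have h2 : |x| ^ 2 = x ^ 2 := sq_abs x
  rw [abs_le] at h
  nlinarith [h.2, h2]

lemma aux_two_pow {u : ℝ} {t : ℕ} (ht : 1 ≤ t) (hu0 : 0 < u) (hu1 : u ≤ 1)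
    (h2 : 1 ≤ u * 2 ^ (t - 1)) : ∃ k, k < t ∧ 1 ≤ u * 2 ^ k ∧ u * 2 ^ k ≤ 2 := by
  have hex : ∃ k : ℕ, 1 ≤ u * 2 ^ k := ⟨t - 1, h2⟩
  classical
  refine ⟨Nat.find hex, ?_, Nat.find_spec hex, ?_⟩
  · have : Nat.find hex ≤ t - 1 := Nat.find_min' hex h2
    omega
  · rcases Nat.eq_zero_or_pos (Nat.find hex) with h0 | h0
    · rw [h0]; simpa using hu1.trans (by norm_num)
    · have hm : ¬ (1 ≤ u * 2 ^ (Nat.find hex - 1)) := Nat.find_min hex (by omega)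
      push_neg at hm
      obtain ⟨m, hm'⟩ : ∃ m, Nat.find hex = m + 1 := ⟨Nat.find hex - 1, by omega⟩
      rw [hm'] at hm ⊢
      simp only [Nat.add_sub_cancel] at hm
      rw [pow_succ]
      nlinarith

lemma aux_t_le_four_pow (t : ℕ) : (t : ℝ) ≤ 4 ^ (t - 1) := by
  have h : t ≤ 2 ^ (t - 1) := by
    have := Nat.lt_two_pow_self (n := t - 1)
    rcases Nat.eq_zero_or_pos t with h0 | h0
    · omega
    · omega
  calc (t : ℝ) ≤ (2 : ℝ) ^ (t - 1) := by exact_mod_cast h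
  _ ≤ 4 ^ (t - 1) := pow_le_pow_left₀ (by norm_num) (by norm_num) _

lemma det_aux {t : ℕ} (ht : 1 ≤ t) {B L e w : ℝ} (hB : 0 < B) (hL : 1 ≤ L)
    (hw0 : 0 ≤ w) (hwt : w ≤ t * B)
    (hb : ∀ k, k < t → 1 / (B * 2 ^ k) * e - (1 / (B * 2 ^ k)) ^ 2 * B * w < L) :
    e ≤ Real.sqrt (16 * L * B * w) + 2 * L * B := by
  have hL0 : 0 < L := by linarith
  have hr0 : 0 ≤ Real.sqrt (L * B * w) := Real.sqrt_nonneg _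
  have hr2 : Real.sqrt (L * B * w) ^ 2 = L * B * w := Real.sq_sqrt (by positivity)
  set r := Real.sqrt (L * B * w) with hrdef
  have h16 : Real.sqrt (16 * L * B * w) = 4 * r := by
    rw [show 16 * L * B * w = 4 ^ 2 * (L * B * w) by ring, Real.sqrt_mul (by positivity),
      Real.sqrt_sq (by norm_num), hrdef]
  rw [h16]
  by_cases hcase : w ≤ L * B
  · have h0 := hb 0 ht
    simp only [pow_zero, mul_one] at h0
    have h1 : (1 / B) * e - (1 / B) ^ 2 * B * w = (e - w) / B := by
      field_simp
    rw [h1] at h0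
    have h2 := (div_lt_iff₀ hB).mp h0
    nlinarith
  · push_neg at hcase
    have hw0' : 0 < w := lt_trans (by positivity) hcase
    have hrpos : 0 < r := Real.sqrt_pos.mpr (by positivity)
    have hu1 : r / w ≤ 1 := by
      rw [div_le_one hw0']
      nlinarith [hr2, hcase]
    have h4pow : ((2:ℝ) ^ (t-1)) ^ 2 = 4 ^ (t-1) := by
      rw [← pow_mul, mul_comm, pow_mul]; norm_num
    have hu2 : 1 ≤ (r / w) * 2 ^ (t - 1) := by
      have hwr : w ≤ r * 2 ^ (t - 1) := by
        have hsq : w ^ 2 ≤ (r * 2 ^ (t - 1)) ^ 2 := by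
          rw [mul_pow, hr2, h4pow]
          have hb4 : (0:ℝ) ≤ B * 4 ^ (t-1) := by positivity
          have h1 : w ≤ L * B * 4 ^ (t-1) := by
            nlinarith [mul_le_mul_of_nonneg_right (aux_t_le_four_pow t) hB.le,
              mul_nonneg (show (0:ℝ) ≤ L - 1 by linarith) hb4]
          nlinarith [mul_le_mul_of_nonneg_left h1 hw0]
        have h2 : (0:ℝ) ≤ r * 2 ^ (t-1) := by positivity
        nlinarith
      rw [div_mul_eq_mul_div, le_div_iff₀ hw0', one_mul]
      linarith
    obtain ⟨k, hkt, hk1, hk2⟩ := aux_two_pow ht (by positivity) hu1 hu2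
    have hbk := hb k hkt
    have h2k : (0:ℝ) < 2 ^ k := by positivity
    have hc : (0:ℝ) < B * 2 ^ k := by positivity
    have h1 : 1 / (B * 2 ^ k) * e - (1 / (B * 2 ^ k)) ^ 2 * B * w
        = (e - w / 2 ^ k) / (B * 2 ^ k) := by
      field_simp
    rw [h1] at hbk
    have he : e - w / 2 ^ k < L * (B * 2 ^ k) := by
      have := (div_lt_iff₀ hc).mp hbk; linarith
    have hb1 : w / 2 ^ k ≤ r := by
      rw [div_le_iff₀ h2k]
      rw [div_mul_eq_mul_div, le_div_iff₀ hw0', one_mul] at hk1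
      linarith
    have hb2 : L * (B * 2 ^ k) ≤ 2 * r := by
      rw [div_mul_eq_mul_div, div_le_iff₀ hw0'] at hk2
      -- r * 2^k ≤ 2 * w
      have h3 : L * B * (r * 2 ^ k) ≤ L * B * (2 * w) :=
        mul_le_mul_of_nonneg_left hk2 (by positivity)
      -- L*B*2*w = 2*r^2
      have h4 : L * B * (2 * w) = 2 * r ^ 2 := by rw [hr2]; ring
      rw [h4] at h3
      -- L*B*2^k*r ≤ 2 r^2 ⇒ divide by r
      have h5 : (L * (B * 2 ^ k)) * r ≤ (2 * r) * r := by nlinarith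
      exact le_of_mul_le_mul_right h5 hrpos
    have hLB : 0 ≤ L * B := (mul_pos hL0 hB).le
    linarith [he, hb1, hb2, hr0, hLB]

theorem ips_predictable_sequence_concentration
    {Ω : Type*} {m0 : MeasurableSpace Ω} {μ : Measure Ω} [IsProbabilityMeasure μ]
    (t : ℕ) (𝔅 : Filtration ℕ m0)
    (pmin h : ℝ) (hpmin : 0 < pmin) (hh : 0 < h)
    (X V : ℕ → Ω → ℝ)
    (hXmeas : ∀ s ∈ Finset.Icc 1 t, StronglyMeasurable[𝔅 s] (X s))
    (hVmeas : ∀ s ∈ Finset.Icc 1 t, StronglyMeasurable[𝔅 (s - 1)] (V s))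
    (hVrange : ∀ s ∈ Finset.Icc 1 t, ∀ᵐ ω ∂μ, V s ω ∈ Set.Icc (0 : ℝ) 1)
    (hcond : ∀ s ∈ Finset.Icc 1 t, μ[X s | 𝔅 (s - 1)] =ᵐ[μ] V s)
    (hXrange : ∀ s ∈ Finset.Icc 1 t, ∀ᵐ ω ∂μ, X s ω ∈ Set.Icc (0 : ℝ) (1 / (pmin * h)))
    (hvar : ∀ s ∈ Finset.Icc 1 t, ∀ᵐ ω ∂μ,
      (μ[(fun ω' => (X s ω') ^ 2) | 𝔅 (s - 1)]) ω ≤ (1 / (pmin * h)) * V s ω)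
    (δ' : ℝ) (hδ' : δ' ∈ Set.Ioo (0 : ℝ) (1 / Real.exp 1)) :
    ENNReal.ofReal (1 - δ') ≤
      μ {ω | |(1 / t : ℝ) * ∑ s ∈ Finset.Icc 1 t, X s ω
              - (1 / t : ℝ) * ∑ s ∈ Finset.Icc 1 t, V s ω| ≤
          Real.sqrt (((1 / t : ℝ) * ∑ s ∈ Finset.Icc 1 t, V s ω)
              * (16 * Real.log (2 * t / δ') / (t * pmin * h)))
            + 2 * Real.log (2 * t / δ') / (t * pmin * h)} := by
  obtain ⟨hδ0, hδe⟩ := hδ'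
  rcases Nat.eq_zero_or_pos t with ht0 | ht
  · subst ht0
    have hset : {ω | |(1 / (0:ℕ) : ℝ) * ∑ s ∈ Finset.Icc 1 0, X s ω
              - (1 / (0:ℕ) : ℝ) * ∑ s ∈ Finset.Icc 1 0, V s ω| ≤
          Real.sqrt (((1 / (0:ℕ) : ℝ) * ∑ s ∈ Finset.Icc 1 0, V s ω)
              * (16 * Real.log (2 * (0:ℕ) / δ') / ((0:ℕ) * pmin * h)))
            + 2 * Real.log (2 * (0:ℕ) / δ') / ((0:ℕ) * pmin * h)} = Set.univ := by
      ext ω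
      norm_num
    rw [hset, measure_univ]
    exact ENNReal.ofReal_le_one.mpr (by linarith)
  -- main case t ≥ 1
  have ht1 : 1 ≤ t := ht
  set B : ℝ := 1 / (pmin * h) with hBdef
  have hB : 0 < B := by rw [hBdef]; positivity
  set L : ℝ := Real.log (2 * t / δ') with hLdef
  have htR : (0:ℝ) < t := by exact_mod_cast ht
  have hfrac : 0 < 2 * (t:ℝ) / δ' := by positivity
  have hL1 : 1 ≤ L := by
    rw [hLdef, Real.le_log_iff_exp_le hfrac, le_div_iff₀ hδ0]
    have h1 : δ' * Real.exp 1 < 1 := (lt_div_iff₀ (Real.exp_pos 1)).mp hδe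
    have h2 : (1:ℝ) ≤ t := by exact_mod_cast ht1
    nlinarith
  -- integrability helper
  have hbdd : ∀ {f : Ω → ℝ}, AEStronglyMeasurable f μ → ∀ C : ℝ,
      (∀ᵐ ω ∂μ, ‖f ω‖ ≤ C) → Integrable f μ :=
    fun hf C hb => (memLp_top_of_bound hf C hb).integrable le_top
  -- basic measurability / integrability
  have hXm0 : ∀ s ∈ Finset.Icc 1 t, StronglyMeasurable (X s) :=
    fun s hs => (hXmeas s hs).mono (𝔅.le s)
  have hVm0 : ∀ s ∈ Finset.Icc 1 t, StronglyMeasurable (V s) :=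
    fun s hs => (hVmeas s hs).mono (𝔅.le (s - 1))
  have hXint : ∀ s ∈ Finset.Icc 1 t, Integrable (X s) μ := by
    intro s hs
    refine hbdd (hXm0 s hs).aestronglyMeasurable B ?_
    filter_upwards [hXrange s hs] with ω hω
    rw [Real.norm_eq_abs, abs_of_nonneg hω.1]
    exact hω.2
  have hX2int : ∀ s ∈ Finset.Icc 1 t, Integrable (fun ω => (X s ω) ^ 2) μ := by
    intro s hs
    refine hbdd ((hXm0 s hs).pow 2).aestronglyMeasurable (B ^ 2) ?_
    filter_upwards [hXrange s hs] with ω hω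
    rw [Real.norm_eq_abs, abs_of_nonneg (by positivity)]
    exact pow_le_pow_left₀ hω.1 hω.2 2
  have hVB : ∀ s ∈ Finset.Icc 1 t, ∀ᵐ ω ∂μ, V s ω ≤ B := by
    intro s hs
    have h1 : μ[X s|𝔅 (s-1)] ≤ᵐ[μ] μ[(fun _ => B)|𝔅 (s-1)] :=
      condExp_mono (hXint s hs) (integrable_const B)
        (by filter_upwards [hXrange s hs] with ω hω; exact hω.2)
    rw [condExp_const (𝔅.le (s-1))] at h1
    filter_upwards [h1, hcond s hs] with ω h1ω h2ω
    rw [← h2ω]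
    exact h1ω
  -- the exponent process
  set g : ℝ → ℕ → Ω → ℝ :=
    fun θ n ω => ∑ s ∈ Finset.Icc 1 n, (θ * (X s ω - V s ω) - θ^2 * B * V s ω) with hgdef
  have hgSM : ∀ θ : ℝ, ∀ n, n ≤ t → StronglyMeasurable[𝔅 n] (fun ω => Real.exp (g θ n ω)) := by
    intro θ n hn
    refine Real.continuous_exp.comp_stronglyMeasurable ?_
    apply Finset.stronglyMeasurable_fun_sum
    intro s hs
    rw [Finset.mem_Icc] at hs
    have hst : s ∈ Finset.Icc 1 t := Finset.mem_Icc.mpr ⟨hs.1, hs.2.trans hn⟩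
    have hXs : StronglyMeasurable[𝔅 n] (X s) := (hXmeas s hst).mono (𝔅.mono hs.2)
    have hVs : StronglyMeasurable[𝔅 n] (V s) :=
      (hVmeas s hst).mono (𝔅.mono (le_trans (Nat.sub_le s 1) hs.2))
    exact ((hXs.sub hVs).const_mul θ).sub (hVs.const_mul (θ^2 * B))
  
  have hae : ∀ᵐ ω ∂μ, ∀ s ∈ (↑(Finset.Icc 1 t) : Set ℕ),
      ((0 ≤ X s ω ∧ X s ω ≤ B) ∧ (0 ≤ V s ω ∧ V s ω ≤ 1) ∧ V s ω ≤ B) := by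
    rw [ae_ball_iff (Finset.countable_toSet _)]
    intro s hs
    rw [Finset.mem_coe] at hs
    filter_upwards [hXrange s hs, hVrange s hs, hVB s hs] with ω h1 h2 h3
    exact ⟨⟨h1.1, h1.2⟩, ⟨h2.1, h2.2⟩, h3⟩
  have hgint : ∀ θ : ℝ, ∀ n, n ≤ t → Integrable (fun ω => Real.exp (g θ n ω)) μ := by
    intro θ n hn
    refine hbdd ((hgSM θ n hn).mono (𝔅.le n)).aestronglyMeasurable
      (Real.exp ((n:ℝ) * (|θ| * (B+1)))) ?_
    filter_upwards [hae] with ω hω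
    rw [Real.norm_eq_abs, abs_of_pos (Real.exp_pos _), Real.exp_le_exp]
    have hbound : ∀ s ∈ Finset.Icc 1 n,
        θ * (X s ω - V s ω) - θ^2 * B * V s ω ≤ |θ| * (B+1) := by
      intro s hs
      rw [Finset.mem_Icc] at hs
      have hst : s ∈ Finset.Icc 1 t := Finset.mem_Icc.mpr ⟨hs.1, hs.2.trans hn⟩
      obtain ⟨⟨hX0, hXB⟩, ⟨hV0, hV1⟩, hVB'⟩ := hω s (Finset.mem_coe.mpr hst)
      have h1 : θ * (X s ω - V s ω) ≤ |θ| * (B+1) := by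
        calc θ * (X s ω - V s ω) ≤ |θ * (X s ω - V s ω)| := le_abs_self _
        _ = |θ| * |X s ω - V s ω| := abs_mul _ _
        _ ≤ |θ| * (B+1) := by
            refine mul_le_mul_of_nonneg_left ?_ (abs_nonneg θ)
            rw [abs_le]; constructor <;> linarith
      nlinarith [mul_nonneg (mul_nonneg (sq_nonneg θ) hB.le) hV0]
    simp only [hgdef]
    calc ∑ s ∈ Finset.Icc 1 n, (θ * (X s ω - V s ω) - θ^2 * B * V s ω)
        ≤ ∑ _s ∈ Finset.Icc 1 n, (|θ| * (B+1)) := Finset.sum_le_sum hbound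
    _ = (n:ℝ) * (|θ| * (B+1)) := by
        rw [Finset.sum_const, Nat.card_Icc, nsmul_eq_mul]
        simp
  have hstep : ∀ θ : ℝ, |θ| * B ≤ 1 → ∀ s ∈ Finset.Icc 1 t,
      μ[fun ω => Real.exp (θ * X s ω)|𝔅 (s-1)] ≤ᵐ[μ]
        fun ω => Real.exp (θ * V s ω + θ^2 * B * V s ω) := by
    intro θ hθ s hs
    have hexpSM : StronglyMeasurable (fun ω => Real.exp (θ * X s ω)) :=
      Real.continuous_exp.comp_stronglyMeasurable ((hXm0 s hs).const_mul θ)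
    have hexpint : Integrable (fun ω => Real.exp (θ * X s ω)) μ := by
      refine hbdd hexpSM.aestronglyMeasurable (Real.exp (|θ| * B)) ?_
      filter_upwards [hXrange s hs] with ω hω
      rw [Real.norm_eq_abs, abs_of_pos (Real.exp_pos _), Real.exp_le_exp]
      calc θ * X s ω ≤ |θ * X s ω| := le_abs_self _
      _ = |θ| * X s ω := by rw [abs_mul, abs_of_nonneg hω.1]
      _ ≤ |θ| * B := mul_le_mul_of_nonneg_left hω.2 (abs_nonneg θ)
    have hquad : (fun ω => Real.exp (θ * X s ω)) ≤ᵐ[μ]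
        fun ω => 1 + θ * X s ω + θ^2 * (X s ω)^2 := by
      filter_upwards [hXrange s hs] with ω hω
      have habs : |θ * X s ω| ≤ 1 := by
        rw [abs_mul, abs_of_nonneg hω.1]
        calc |θ| * X s ω ≤ |θ| * B := mul_le_mul_of_nonneg_left hω.2 (abs_nonneg θ)
        _ ≤ 1 := hθ
      calc Real.exp (θ * X s ω) ≤ 1 + θ * X s ω + (θ * X s ω)^2 := aux_exp_quad habs
      _ = 1 + θ * X s ω + θ^2 * (X s ω)^2 := by ring
    have hq_int : Integrable (fun ω => 1 + θ * X s ω + θ^2 * (X s ω)^2) μ :=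
      ((integrable_const 1).add ((hXint s hs).const_mul θ)).add
        ((hX2int s hs).const_mul (θ^2))
    have h1 := condExp_mono (m := 𝔅 (s-1)) hexpint hq_int hquad
    have hfeq : (fun ω => 1 + θ * X s ω + θ^2 * (X s ω)^2)
        = (fun _ => (1:ℝ)) + (θ • X s + θ^2 • fun ω => (X s ω)^2) := by
      funext ω; simp only [Pi.add_apply, Pi.smul_apply, smul_eq_mul]; ring
    have h2 : μ[fun ω => 1 + θ * X s ω + θ^2 * (X s ω)^2|𝔅 (s-1)] =ᵐ[μ]
        (fun _ => (1:ℝ)) + (θ • μ[X s|𝔅 (s-1)] + θ^2 • μ[fun ω => (X s ω)^2|𝔅 (s-1)]) := by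
      rw [hfeq]
      refine (condExp_add (integrable_const 1)
        (((hXint s hs).smul θ).add ((hX2int s hs).smul (θ^2))) (𝔅 (s-1))).trans ?_
      refine Filter.EventuallyEq.add ?_ ?_
      · rw [condExp_const (𝔅.le (s-1))]
      · refine (condExp_add ((hXint s hs).smul θ) ((hX2int s hs).smul (θ^2)) (𝔅 (s-1))).trans ?_
        exact Filter.EventuallyEq.add (condExp_smul θ (X s) (𝔅 (s-1))) (condExp_smul (θ^2) _ (𝔅 (s-1)))
    filter_upwards [h1, h2, hcond s hs, hvar s hs] with ω hω1 hω2 hω3 hω4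
    calc (μ[fun ω => Real.exp (θ * X s ω)|𝔅 (s-1)]) ω
        ≤ (μ[fun ω => 1 + θ * X s ω + θ^2 * (X s ω)^2|𝔅 (s-1)]) ω := hω1
    _ = 1 + θ * (μ[X s|𝔅 (s-1)]) ω + θ^2 * (μ[fun ω => (X s ω)^2|𝔅 (s-1)]) ω := by
        rw [hω2]; simp only [Pi.add_apply, Pi.smul_apply, smul_eq_mul]; ring
    _ ≤ 1 + θ * V s ω + θ^2 * (B * V s ω) := by
        rw [hω3]
        have := mul_le_mul_of_nonneg_left hω4 (sq_nonneg θ)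
        linarith
    _ ≤ Real.exp (θ * V s ω + θ^2 * B * V s ω) := by
        have := Real.add_one_le_exp (θ * V s ω + θ^2 * B * V s ω)
        linarith
  have hmgf : ∀ θ : ℝ, |θ| * B ≤ 1 → ∀ n, n ≤ t → ∫ ω, Real.exp (g θ n ω) ∂μ ≤ 1 := by
    intro θ hθ n
    induction n with
    | zero => intro _; simp [hgdef]
    | succ n ih =>
      intro hn1
      have hnt : n ≤ t := Nat.le_of_succ_le hn1
      have hmem : (n+1) ∈ Finset.Icc 1 t :=
        Finset.mem_Icc.mpr ⟨Nat.succ_le_succ (Nat.zero_le n), hn1⟩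
      have key := hstep θ hθ (n+1) hmem
      simp only [Nat.add_sub_cancel] at key
      have hdecomp : (fun ω => Real.exp (g θ (n+1) ω))
          = fun ω => (Real.exp (g θ n ω)
              * Real.exp (-(θ * V (n+1) ω) - θ^2 * B * V (n+1) ω))
              * Real.exp (θ * X (n+1) ω) := by
        funext ω
        rw [← Real.exp_add, ← Real.exp_add]
        congr 1
        simp only [hgdef]
        rw [Finset.sum_Icc_succ_top (Nat.succ_le_succ (Nat.zero_le n))]
        ring
      have hV' : StronglyMeasurable[𝔅 n] (V (n+1)) := by
        have := hVmeas (n+1) hmem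
        simpa using this
      have hφSM : StronglyMeasurable[𝔅 n]
          (fun ω => Real.exp (g θ n ω)
            * Real.exp (-(θ * V (n+1) ω) - θ^2 * B * V (n+1) ω)) := by
        refine (hgSM θ n hnt).mul ?_
        refine Real.continuous_exp.comp_stronglyMeasurable ?_
        exact ((hV'.const_mul θ).neg).sub (hV'.const_mul (θ^2 * B))
      have hψint : Integrable (fun ω => Real.exp (θ * X (n+1) ω)) μ := by
        refine hbdd (Real.continuous_exp.comp_stronglyMeasurable
          ((hXm0 (n+1) hmem).const_mul θ)).aestronglyMeasurable (Real.exp (|θ| * B)) ?_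
        filter_upwards [hXrange (n+1) hmem] with ω hω
        rw [Real.norm_eq_abs, abs_of_pos (Real.exp_pos _), Real.exp_le_exp]
        calc θ * X (n+1) ω ≤ |θ * X (n+1) ω| := le_abs_self _
        _ = |θ| * X (n+1) ω := by rw [abs_mul, abs_of_nonneg hω.1]
        _ ≤ |θ| * B := mul_le_mul_of_nonneg_left hω.2 (abs_nonneg θ)
      have hfull : Integrable (fun ω => (Real.exp (g θ n ω)
          * Real.exp (-(θ * V (n+1) ω) - θ^2 * B * V (n+1) ω))
          * Real.exp (θ * X (n+1) ω)) μ := by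
        rw [← hdecomp]; exact hgint θ (n+1) hn1
      have hpull : μ[fun ω => (Real.exp (g θ n ω)
          * Real.exp (-(θ * V (n+1) ω) - θ^2 * B * V (n+1) ω))
          * Real.exp (θ * X (n+1) ω)|𝔅 n] =ᵐ[μ]
          fun ω => (Real.exp (g θ n ω)
          * Real.exp (-(θ * V (n+1) ω) - θ^2 * B * V (n+1) ω))
          * (μ[fun ω => Real.exp (θ * X (n+1) ω)|𝔅 n]) ω :=
        condExp_mul_of_stronglyMeasurable_left hφSM hfull hψint
      have hcbound : μ[fun ω => (Real.exp (g θ n ω)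
          * Real.exp (-(θ * V (n+1) ω) - θ^2 * B * V (n+1) ω))
          * Real.exp (θ * X (n+1) ω)|𝔅 n] ≤ᵐ[μ] fun ω => Real.exp (g θ n ω) := by
        filter_upwards [hpull, key] with ω h1 h2
        rw [h1]
        calc (Real.exp (g θ n ω) * Real.exp (-(θ * V (n+1) ω) - θ^2 * B * V (n+1) ω))
              * (μ[fun ω => Real.exp (θ * X (n+1) ω)|𝔅 n]) ω
            ≤ (Real.exp (g θ n ω) * Real.exp (-(θ * V (n+1) ω) - θ^2 * B * V (n+1) ω))
              * Real.exp (θ * V (n+1) ω + θ^2 * B * V (n+1) ω) :=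
              mul_le_mul_of_nonneg_left h2 (by positivity)
        _ = Real.exp (g θ n ω) := by
              rw [mul_assoc, ← Real.exp_add,
                show (-(θ * V (n+1) ω) - θ^2 * B * V (n+1) ω)
                  + (θ * V (n+1) ω + θ^2 * B * V (n+1) ω) = 0 by ring,
                Real.exp_zero, mul_one]
      calc ∫ ω, Real.exp (g θ (n+1) ω) ∂μ
          = ∫ ω, ((Real.exp (g θ n ω)
              * Real.exp (-(θ * V (n+1) ω) - θ^2 * B * V (n+1) ω))
              * Real.exp (θ * X (n+1) ω)) ∂μ := by rw [hdecomp]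
      _ = ∫ ω, (μ[fun ω => (Real.exp (g θ n ω)
              * Real.exp (-(θ * V (n+1) ω) - θ^2 * B * V (n+1) ω))
              * Real.exp (θ * X (n+1) ω)|𝔅 n]) ω ∂μ :=
            (integral_condExp (𝔅.le n)).symm
      _ ≤ ∫ ω, Real.exp (g θ n ω) ∂μ :=
            integral_mono_ae integrable_condExp (hgint θ n hnt) hcbound
      _ ≤ 1 := ih hnt
  
  -- the lambda grid satisfies the mgf condition
  have hlamB : ∀ k : ℕ, ∀ ε : ℝ, |ε| = 1 → |ε * (1 / (B * 2 ^ k))| * B ≤ 1 := by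
    intro k ε hε
    have h2k : (1:ℝ) ≤ 2 ^ k := one_le_pow₀ (by norm_num)
    rw [abs_mul, hε, one_mul, abs_of_pos (by positivity), div_mul_eq_mul_div, one_mul,
      div_le_one (by positivity)]
    nlinarith
  -- Markov
  have hmark : ∀ θ : ℝ, |θ| * B ≤ 1 →
      μ {ω | Real.exp L ≤ Real.exp (g θ t ω)} ≤ ENNReal.ofReal (δ' / (2 * t)) := by
    intro θ hθ
    have hnn : 0 ≤ᵐ[μ] fun ω => Real.exp (g θ t ω) := ae_of_all _ fun ω => (Real.exp_pos _).le
    have hmk := mul_meas_ge_le_integral_of_nonneg hnn (hgint θ t le_rfl) (Real.exp L)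
    have hEL : (0:ℝ) < Real.exp L := Real.exp_pos L
    have hint1 := hmgf θ hθ t le_rfl
    have hto : (μ {ω | Real.exp L ≤ Real.exp (g θ t ω)}).toReal ≤ δ' / (2 * t) := by
      have h1 : (μ {ω | Real.exp L ≤ Real.exp (g θ t ω)}).toReal ≤ 1 / Real.exp L := by
        rw [le_div_iff₀ hEL]
        calc (μ {ω | Real.exp L ≤ Real.exp (g θ t ω)}).toReal * Real.exp L
            = Real.exp L * (μ {ω | Real.exp L ≤ Real.exp (g θ t ω)}).toReal := mul_comm _ _
        _ ≤ ∫ ω, Real.exp (g θ t ω) ∂μ := hmk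
        _ ≤ 1 := hint1
      have h2 : 1 / Real.exp L = δ' / (2 * t) := by
        rw [hLdef, Real.exp_log hfrac, one_div_div]
      rw [h2] at h1; exact h1
    exact (ENNReal.le_ofReal_iff_toReal_le (measure_ne_top μ _) (by positivity)).mpr hto
  -- bad events
  set bad : ℕ → ℝ → Set Ω :=
    fun k ε => {ω | Real.exp L ≤ Real.exp (g (ε * (1 / (B * 2 ^ k))) t ω)} with hbaddef
  have hbadm : ∀ k, ∀ ε : ℝ, |ε| = 1 → μ (bad k ε) ≤ ENNReal.ofReal (δ' / (2 * t)) :=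
    fun k ε hε => hmark _ (hlamB k ε hε)
  set A : Set Ω := ⋃ k ∈ Finset.range t, (bad k 1 ∪ bad k (-1)) with hAdef
  have hA : μ A ≤ ENNReal.ofReal δ' := by
    calc μ A ≤ ∑ k ∈ Finset.range t, μ (bad k 1 ∪ bad k (-1)) :=
          measure_biUnion_finset_le _ _
    _ ≤ ∑ _k ∈ Finset.range t,
          (ENNReal.ofReal (δ' / (2 * t)) + ENNReal.ofReal (δ' / (2 * t))) := by
        refine Finset.sum_le_sum fun k _ => ?_
        exact (measure_union_le _ _).trans
          (add_le_add (hbadm k 1 (by norm_num)) (hbadm k (-1) (by norm_num)))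
    _ = ENNReal.ofReal δ' := by
        rw [Finset.sum_const, Finset.card_range,
          ← ENNReal.ofReal_add (by positivity) (by positivity), nsmul_eq_mul,
          ← ENNReal.ofReal_natCast t, ← ENNReal.ofReal_mul (by positivity)]
        congr 1
        field_simp
        ring
  -- the a.e. good set
  set E : Set Ω := {ω | ∀ s ∈ (↑(Finset.Icc 1 t) : Set ℕ),
      ((0 ≤ X s ω ∧ X s ω ≤ B) ∧ (0 ≤ V s ω ∧ V s ω ≤ 1) ∧ V s ω ≤ B)} with hEdef
  have hEnull : μ Eᶜ = 0 := by
    rw [hEdef, Set.compl_setOf]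
    exact ae_iff.mp hae
  -- pointwise: good implies target
  have hgood : ∀ ω, ω ∉ A → ω ∈ E →
      |(1 / t : ℝ) * ∑ s ∈ Finset.Icc 1 t, X s ω
          - (1 / t : ℝ) * ∑ s ∈ Finset.Icc 1 t, V s ω| ≤
        Real.sqrt (((1 / t : ℝ) * ∑ s ∈ Finset.Icc 1 t, V s ω)
            * (16 * L / (t * pmin * h))) + 2 * L / (t * pmin * h) := by
    intro ω hωA hωE
    rw [hEdef] at hωE
    have hgt : ∀ θ : ℝ, g θ t ω
        = θ * ((∑ s ∈ Finset.Icc 1 t, X s ω) - ∑ s ∈ Finset.Icc 1 t, V s ω)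
          - θ^2 * B * (∑ s ∈ Finset.Icc 1 t, V s ω) := by
      intro θ
      simp only [hgdef, Finset.sum_sub_distrib, ← Finset.mul_sum]
    have hnb : ∀ k, k < t → ∀ ε : ℝ, ε = 1 ∨ ε = -1 →
        (ε * (1 / (B * 2 ^ k)))
            * ((∑ s ∈ Finset.Icc 1 t, X s ω) - ∑ s ∈ Finset.Icc 1 t, V s ω)
          - (ε * (1 / (B * 2 ^ k)))^2 * B * (∑ s ∈ Finset.Icc 1 t, V s ω) < L := by
      intro k hk ε hε
      have hne : ω ∉ bad k ε := by
        intro hmem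
        refine hωA ?_
        rw [hAdef]
        refine Set.mem_iUnion₂.mpr ⟨k, Finset.mem_range.mpr hk, ?_⟩
        rcases hε with rfl | rfl
        · exact Or.inl hmem
        · exact Or.inr hmem
      have hlt : g (ε * (1 / (B * 2 ^ k))) t ω < L := by
        by_contra hcon
        push_neg at hcon
        exact hne (Real.exp_le_exp.mpr hcon)
      rw [hgt] at hlt
      exact hlt
    have hw0 : 0 ≤ ∑ s ∈ Finset.Icc 1 t, V s ω :=
      Finset.sum_nonneg fun s hs => (hωE s (Finset.mem_coe.mpr hs)).2.1.1
    have hwt : ∑ s ∈ Finset.Icc 1 t, V s ω ≤ t * B := by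
      calc ∑ s ∈ Finset.Icc 1 t, V s ω ≤ ∑ _s ∈ Finset.Icc 1 t, B :=
            Finset.sum_le_sum fun s hs => (hωE s (Finset.mem_coe.mpr hs)).2.2
      _ = t * B := by rw [Finset.sum_const, Nat.card_Icc, nsmul_eq_mul]; simp
    have hd1 : (∑ s ∈ Finset.Icc 1 t, X s ω) - (∑ s ∈ Finset.Icc 1 t, V s ω)
        ≤ Real.sqrt (16 * L * B * (∑ s ∈ Finset.Icc 1 t, V s ω)) + 2 * L * B := by
      refine det_aux ht1 hB hL1 hw0 hwt fun k hk => ?_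
      have hk1 := hnb k hk 1 (Or.inl rfl)
      have : 1 / (B * 2 ^ k)
            * ((∑ s ∈ Finset.Icc 1 t, X s ω) - ∑ s ∈ Finset.Icc 1 t, V s ω)
          - (1 / (B * 2 ^ k))^2 * B * (∑ s ∈ Finset.Icc 1 t, V s ω)
          = (1 * (1 / (B * 2 ^ k)))
            * ((∑ s ∈ Finset.Icc 1 t, X s ω) - ∑ s ∈ Finset.Icc 1 t, V s ω)
          - (1 * (1 / (B * 2 ^ k)))^2 * B * (∑ s ∈ Finset.Icc 1 t, V s ω) := by ring
      rw [this]; exact hk1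
    have hd2 : -((∑ s ∈ Finset.Icc 1 t, X s ω) - (∑ s ∈ Finset.Icc 1 t, V s ω))
        ≤ Real.sqrt (16 * L * B * (∑ s ∈ Finset.Icc 1 t, V s ω)) + 2 * L * B := by
      refine det_aux ht1 hB hL1 hw0 hwt fun k hk => ?_
      have hk1 := hnb k hk (-1) (Or.inr rfl)
      have : 1 / (B * 2 ^ k)
            * (-((∑ s ∈ Finset.Icc 1 t, X s ω) - ∑ s ∈ Finset.Icc 1 t, V s ω))
          - (1 / (B * 2 ^ k))^2 * B * (∑ s ∈ Finset.Icc 1 t, V s ω)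
          = (-1 * (1 / (B * 2 ^ k)))
            * ((∑ s ∈ Finset.Icc 1 t, X s ω) - ∑ s ∈ Finset.Icc 1 t, V s ω)
          - (-1 * (1 / (B * 2 ^ k)))^2 * B * (∑ s ∈ Finset.Icc 1 t, V s ω) := by ring
      rw [this]; exact hk1
    have habs : |(∑ s ∈ Finset.Icc 1 t, X s ω) - (∑ s ∈ Finset.Icc 1 t, V s ω)|
        ≤ Real.sqrt (16 * L * B * (∑ s ∈ Finset.Icc 1 t, V s ω)) + 2 * L * B :=
      abs_le.mpr ⟨by linarith, hd1⟩
    -- algebra to the stated form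
    have hphne : (pmin * h) ≠ 0 := by positivity
    have htne : (t:ℝ) ≠ 0 := ne_of_gt htR
    have e1 : (1 / t : ℝ) * ∑ s ∈ Finset.Icc 1 t, X s ω
        - (1 / t : ℝ) * ∑ s ∈ Finset.Icc 1 t, V s ω
        = ((∑ s ∈ Finset.Icc 1 t, X s ω) - (∑ s ∈ Finset.Icc 1 t, V s ω)) / t := by
      ring
    have e2 : ((1 / t : ℝ) * ∑ s ∈ Finset.Icc 1 t, V s ω) * (16 * L / (t * pmin * h))
        = (16 * L * B * (∑ s ∈ Finset.Icc 1 t, V s ω)) / (t:ℝ)^2 := by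
      rw [hBdef]; field_simp
    have e3 : 2 * L / ((t:ℝ) * pmin * h) = (2 * L * B) / t := by
      rw [hBdef]; field_simp
    have h16nn : (0:ℝ) ≤ 16 * L * B * (∑ s ∈ Finset.Icc 1 t, V s ω) := by
      have h1 : (0:ℝ) ≤ 16 * L * B := by positivity
      exact mul_nonneg h1 hw0
    have e4 : Real.sqrt ((16 * L * B * (∑ s ∈ Finset.Icc 1 t, V s ω)) / (t:ℝ)^2)
        = Real.sqrt (16 * L * B * (∑ s ∈ Finset.Icc 1 t, V s ω)) / t := by
      rw [Real.sqrt_div h16nn, Real.sqrt_sq htR.le]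
    rw [e1, e2, e3, e4, abs_div, abs_of_pos htR, ← add_div]
    exact div_le_div_of_nonneg_right habs htR.le
  -- assembly
  have hsub2 : (A ∪ Eᶜ)ᶜ ⊆ {ω | |(1 / t : ℝ) * ∑ s ∈ Finset.Icc 1 t, X s ω
          - (1 / t : ℝ) * ∑ s ∈ Finset.Icc 1 t, V s ω| ≤
        Real.sqrt (((1 / t : ℝ) * ∑ s ∈ Finset.Icc 1 t, V s ω)
            * (16 * L / (t * pmin * h))) + 2 * L / (t * pmin * h)} := by
    intro ω hω
    rw [Set.compl_union, compl_compl] at hω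
    exact hgood ω hω.1 hω.2
  have hcompl : μ (A ∪ Eᶜ) ≤ ENNReal.ofReal δ' := by
    refine (measure_union_le _ _).trans ?_
    rw [hEnull, add_zero]
    exact hA
  calc ENNReal.ofReal (1 - δ')
      = 1 - ENNReal.ofReal δ' := by
        rw [ENNReal.ofReal_sub 1 hδ0.le, ENNReal.ofReal_one]
  _ ≤ 1 - μ (A ∪ Eᶜ) := tsub_le_tsub_left hcompl 1
  _ ≤ μ ((A ∪ Eᶜ)ᶜ) := by
      refine tsub_le_iff_right.mpr ?_
      calc (1:ENNReal) = μ ((A ∪ Eᶜ)ᶜ ∪ (A ∪ Eᶜ)) := by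
            rw [Set.compl_union_self, measure_univ]
      _ ≤ μ ((A ∪ Eᶜ)ᶜ) + μ (A ∪ Eᶜ) := measure_union_le _ _
  _ ≤ _ := measure_mono hsub2
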